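/- arXiv:0804.3878 — 2 statements merged into one kernel-verified Lean document; each statement's English description precedes it below -/
import Mathlib

section
/- Let H be a complex Hilbert space and T a bounded self-adjoint operator on H. Assume the set S = {λ : ℝ | λ > 0 and λ ∈ spectrum ℂ T} is nonempty. Then the infimum, over all φ ∈ H with Re⟪Tφ, φ⟫ > 0, of ‖Tφ‖² / Re⟪Tφ, φ⟫ is equal to the infimum of S. (This is the Hilbert-space content of Lemma 3.4 of the paper, which identifies λ₁⁺(M,g,σ) with the infimum of the positive part of the Dirac spectrum on a complete manifold, where the Dirac operator is essentially self-adjoint.) -/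
open scoped InnerProductSpace

section Aux

variable {H : Type*} [NormedAddCommGroup H] [InnerProductSpace ℂ H] [CompleteSpace H]

/-- If a self-adjoint operator has nonnegative quadratic form, its complex spectrum has
nonnegative real parts. -/
lemma aux_spec_nonneg {A : H →L[ℂ] H} (hA : IsSelfAdjoint A)
    (hpos : ∀ φ : H, 0 ≤ (⟪A φ, φ⟫_ℂ).re) {z : ℂ} (hz : z ∈ spectrum ℂ A) : 0 ≤ z.re := by
  have hP : A.IsPositive := ContinuousLinearMap.isPositive_def'.mpr ⟨hA, fun x => by
    simpa [ContinuousLinearMap.reApplyInnerSelf] using hpos x⟩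
  have h0 : (0 : H →L[ℂ] H) ≤ A := (ContinuousLinearMap.nonneg_iff_isPositive A).mpr hP
  have hre : z = z.re := hA.mem_spectrum_eq_re hz
  have h1 : (z.re : ℂ) ∈ spectrum ℂ A := hre ▸ hz
  have h2 : z.re ∈ spectrum ℝ A := by
    rw [← spectrum.algebraMap_mem_iff ℂ]
    simpa using h1
  exact spectrum_nonneg_of_nonneg h0 h2

/-- Conversely, if the complex spectrum of a self-adjoint operator has nonnegative real parts,
its quadratic form is nonnegative. -/
lemma aux_form_nonneg {A : H →L[ℂ] H} (hA : IsSelfAdjoint A)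
    (hspec : ∀ z ∈ spectrum ℂ A, 0 ≤ z.re) (φ : H) : 0 ≤ (⟪A φ, φ⟫_ℂ).re := by
  have h0 : (0 : H →L[ℂ] H) ≤ A := by
    rw [StarOrderedRing.nonneg_iff_spectrum_nonneg (R := ℝ) A hA]
    intro x hx
    have hx' : (x : ℂ) ∈ spectrum ℂ A := by
      have := spectrum.algebraMap_mem_iff (R := ℝ) (S := ℂ) (a := A) (r := x)
      simpa using this.mpr hx
    simpa using hspec _ hx'
  have hP := (ContinuousLinearMap.nonneg_iff_isPositive A).mp h0
  simpa [ContinuousLinearMap.reApplyInnerSelf] using hP.re_inner_nonneg_left φ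

lemma aux_quadform {T : H →L[ℂ] H} (hT : IsSelfAdjoint T) (c : ℝ) (φ : H) :
    (⟪(T ^ 2 - (c : ℂ) • T) φ, φ⟫_ℂ).re = ‖T φ‖ ^ 2 - c * (⟪T φ, φ⟫_ℂ).re := by
  have hsymm := (ContinuousLinearMap.isSelfAdjoint_iff_isSymmetric).mp hT
  have h1 : (T ^ 2 - (c : ℂ) • T) φ = T (T φ) - (c : ℂ) • T φ := by
    simp [pow_two, ContinuousLinearMap.mul_apply]
  have h2 : ⟪T (T φ), φ⟫_ℂ = ⟪T φ, T φ⟫_ℂ := hsymm (T φ) φ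
  rw [h1, inner_sub_left, inner_smul_left, h2]
  have h3 : ⟪T φ, T φ⟫_ℂ = ((‖T φ‖ : ℂ) ^ 2) := by
    rw [inner_self_eq_norm_sq_to_K]
    norm_cast
  rw [h3, Complex.sub_re, ← Complex.ofReal_pow, Complex.ofReal_re]
  simp [Complex.conj_ofReal, Complex.mul_re]

lemma aux_aeval {T : H →L[ℂ] H} (c : ℝ) :
    Polynomial.aeval T (Polynomial.X ^ 2 - Polynomial.C (c : ℂ) * Polynomial.X)
      = T ^ 2 - (c : ℂ) • T := by
  simp [Algebra.smul_def]

end Aux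

/-- Hilbert-space content of Lemma 3.4: the infimum of the Rayleigh-type quotients
`‖Tφ‖² / Re⟪Tφ, φ⟫` over all `φ` with `Re⟪Tφ, φ⟫ > 0` equals the infimum of the
positive part of the spectrum of the bounded self-adjoint operator `T`. -/
theorem stmt_0 {H : Type*} [NormedAddCommGroup H] [InnerProductSpace ℂ H] [CompleteSpace H]
    (T : H →L[ℂ] H) (hT : IsSelfAdjoint T)
    (hS : {l : ℝ | 0 < l ∧ (l : ℂ) ∈ spectrum ℂ T}.Nonempty) :
    sInf {r : ℝ | ∃ φ : H, 0 < (⟪T φ, φ⟫_ℂ).re ∧ r = ‖T φ‖ ^ 2 / (⟪T φ, φ⟫_ℂ).re} =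
      sInf {l : ℝ | 0 < l ∧ (l : ℂ) ∈ spectrum ℂ T} := by
  set Sset := {l : ℝ | 0 < l ∧ (l : ℂ) ∈ spectrum ℂ T} with hSset
  set Rset := {r : ℝ | ∃ φ : H, 0 < (⟪T φ, φ⟫_ℂ).re ∧ r = ‖T φ‖ ^ 2 / (⟪T φ, φ⟫_ℂ).re}
    with hRset
  have hSbdd : BddBelow Sset := ⟨0, fun l hl => hl.1.le⟩
  have hRbdd : BddBelow Rset := by
    refine ⟨0, fun r hr => ?_⟩
    obtain ⟨φ, hφ, rfl⟩ := hr
    positivity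
  have hspecne : (spectrum ℂ T).Nonempty := by
    obtain ⟨l, hl⟩ := hS
    exact ⟨l, hl.2⟩
  -- the polynomial spectral mapping
  have hmap : ∀ c : ℝ, spectrum ℂ (T ^ 2 - (c : ℂ) • T)
      = (fun z : ℂ => z ^ 2 - c * z) '' spectrum ℂ T := by
    intro c
    have := spectrum.map_polynomial_aeval_of_nonempty T
      (Polynomial.X ^ 2 - Polynomial.C (c : ℂ) * Polynomial.X) hspecne
    rw [aux_aeval] at this
    rw [this]
    congr 1
    ext z
    simp
  have hsa : ∀ c : ℝ, IsSelfAdjoint (T ^ 2 - (c : ℂ) • T) := fun c =>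
    (hT.pow 2).sub ((IsSelfAdjoint.smul (by simp [IsSelfAdjoint, Complex.star_def, Complex.conj_ofReal]) hT))
  -- R is nonempty
  have hRne : Rset.Nonempty := by
    by_contra hempty
    push_neg at hempty
    have hle : ∀ φ : H, 0 ≤ (⟪(-T) φ, φ⟫_ℂ).re := by
      intro φ
      rcases le_or_gt (⟪T φ, φ⟫_ℂ).re 0 with h | h
      · simpa using h
      · have hmem : (‖T φ‖ ^ 2 / (⟪T φ, φ⟫_ℂ).re) ∈ Rset := ⟨φ, h, rfl⟩
        rw [hempty] at hmem
        exact absurd hmem (Set.notMem_empty _)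
    obtain ⟨l, hl, hlspec⟩ := hS
    have hneg : (-(l : ℂ)) ∈ spectrum ℂ (-T) := by
      rw [← spectrum.neg_eq]
      exact Set.neg_mem_neg.mpr hlspec
    have := aux_spec_nonneg hT.neg hle hneg
    simp at this
    linarith
  have hSinf_nonneg : 0 ≤ sInf Sset := le_csInf hS fun l hl => hl.1.le
  apply le_antisymm
  · -- sInf Rset ≤ sInf Sset
    apply le_csInf hS
    intro l hl
    by_contra hlt
    push_neg at hlt
    set c := (l + sInf Rset) / 2 with hc
    have hlc : l < c := by simp [hc]; linarith
    have hcR : c < sInf Rset := by simp [hc]; linarith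
    -- quadratic form of T^2 - c•T is nonnegative
    have hform : ∀ φ : H, 0 ≤ (⟪(T ^ 2 - (c : ℂ) • T) φ, φ⟫_ℂ).re := by
      intro φ
      rw [aux_quadform hT c φ]
      rcases le_or_gt (⟪T φ, φ⟫_ℂ).re 0 with h | h
      · nlinarith [sq_nonneg ‖T φ‖, hl.1, hlc]
      · have hmem : ‖T φ‖ ^ 2 / (⟪T φ, φ⟫_ℂ).re ∈ Rset := ⟨φ, h, rfl⟩
        have h1 : sInf Rset ≤ ‖T φ‖ ^ 2 / (⟪T φ, φ⟫_ℂ).re := csInf_le hRbdd hmem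
        have h2 : c * (⟪T φ, φ⟫_ℂ).re ≤ ‖T φ‖ ^ 2 := by
          rw [← le_div_iff₀ h] at *
          linarith
        linarith
    -- but l² - c·l < 0 is in the spectrum
    have hmem : ((l : ℂ) ^ 2 - c * l) ∈ spectrum ℂ (T ^ 2 - (c : ℂ) • T) := by
      rw [hmap c]
      exact ⟨(l : ℂ), hl.2, by push_cast; ring⟩
    have := aux_spec_nonneg (hsa c) hform hmem
    have hre : ((l : ℂ) ^ 2 - (c : ℂ) * (l : ℂ)).re = l ^ 2 - c * l := by
      push_cast
      simp [Complex.sub_re, Complex.mul_re, pow_two]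
    rw [hre] at this
    nlinarith [hl.1]
  · -- sInf Sset ≤ sInf Rset
    apply le_csInf hRne
    rintro r ⟨φ, hφ, rfl⟩
    set c := sInf Sset with hc
    have hspec : ∀ z ∈ spectrum ℂ (T ^ 2 - (c : ℂ) • T), 0 ≤ z.re := by
      intro z hz
      rw [hmap c] at hz
      obtain ⟨w, hw, rfl⟩ := hz
      have hwre : w = w.re := hT.mem_spectrum_eq_re hw
      rw [hwre]
      have hre : (((w.re : ℂ)) ^ 2 - (c : ℂ) * (w.re : ℂ)).re = w.re ^ 2 - c * w.re := by
        push_cast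
        simp [Complex.sub_re, Complex.mul_re, pow_two]
      rw [hre]
      rcases le_or_gt w.re 0 with h | h
      · nlinarith [hSinf_nonneg]
      · have : w.re ∈ Sset := ⟨h, by rw [← hwre]; exact hw⟩
        have := csInf_le hSbdd this
        nlinarith
    have h0 := aux_form_nonneg (hsa c) hspec φ
    rw [aux_quadform hT c φ] at h0
    rw [le_div_iff₀ hφ]
    linarith
end

section
/- Let H be a complex Hilbert space and T a bounded self-adjoint operator on H. If λ > 0 is a real number with λ ∈ spectrum ℂ T, then for every ε > 0 there exists φ ∈ H with Re⟪Tφ, φ⟫ > 0 and ‖Tφ‖² < (λ + ε) · Re⟪Tφ, φ⟫. (This is the Hilbert-space content of Lemma 3.3(ii): if λ > 0 is an eigenvalue of the Dirac operator or an element of its essential spectrum, then λ₁⁺ ≤ λ; the proof uses an approximating sequence φᵢ with ‖Tφᵢ − λφᵢ‖ → 0 and ‖φᵢ‖ → 1, for which ‖Tφᵢ‖²/Re⟪Tφᵢ, φᵢ⟫ → λ.) -/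
open scoped InnerProductSpace

lemma approx_eigen {H : Type*} [NormedAddCommGroup H] [InnerProductSpace ℂ H] [CompleteSpace H]
    (T : H →L[ℂ] H) (hT : IsSelfAdjoint T)
    (lam : ℝ) (hspec : (lam : ℂ) ∈ spectrum ℂ T) :
    ∀ δ > (0 : ℝ), ∃ φ : H, ‖φ‖ = 1 ∧ ‖T φ - (lam : ℂ) • φ‖ < δ := by
  intro δ hδ
  by_contra hcon
  push_neg at hcon
  set S : H →L[ℂ] H := T - (lam : ℂ) • (1 : H →L[ℂ] H) with hSdef
  have hSapp : ∀ x : H, S x = T x - (lam : ℂ) • x := fun x => rfl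
  have hSsa : IsSelfAdjoint S := by
    refine hT.sub (IsSelfAdjoint.smul ?_ (.one _))
    rw [isSelfAdjoint_iff, Complex.star_def, Complex.conj_ofReal]
  have hbound : ∀ x : H, ‖x‖ ≤ δ⁻¹ * ‖S x‖ := by
    intro x
    rcases eq_or_ne x 0 with rfl | hx
    · simp
    · have hnx : (0 : ℝ) < ‖x‖ := norm_pos_iff.mpr hx
      have h1 : ‖(‖x‖⁻¹ : ℂ) • x‖ = 1 := by
        simp [norm_smul, inv_mul_cancel₀ hnx.ne']
      have h2 := hcon _ h1
      rw [← hSapp, map_smul, norm_smul] at h2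
      simp only [norm_inv, Complex.norm_real, Real.norm_eq_abs, abs_of_pos hnx] at h2
      rw [le_inv_mul_iff₀ hδ]
      nlinarith [mul_le_mul_of_nonneg_right h2 hnx.le, inv_mul_cancel₀ hnx.ne',
        norm_nonneg (S x)]
  have hanti : AntilipschitzWith (⟨δ⁻¹, by positivity⟩ : NNReal) S :=
    ContinuousLinearMap.antilipschitz_of_bound S hbound
  have hinj : Function.Injective S := hanti.injective
  have hdense : (LinearMap.range (S : H →ₗ[ℂ] H)).topologicalClosure = ⊤ := by
    rw [Submodule.topologicalClosure_eq_top_iff]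
    rw [Submodule.eq_bot_iff]
    intro v hv
    have hSv : S v = 0 := by
      have h0 : ⟪S (S v), v⟫_ℂ = 0 := hv _ ⟨S v, rfl⟩
      have h1 : ⟪S v, S v⟫_ℂ = 0 := (hSsa.isSymmetric (S v) v).symm.trans h0
      exact inner_self_eq_zero.mp h1
    have : S v = S 0 := by simpa using hSv
    exact hinj this
  have hbij : Function.Bijective S :=
    (S.bijective_iff_dense_range_and_antilipschitz).mpr ⟨hdense, _, hanti⟩
  have hunit : IsUnit S := ContinuousLinearMap.isUnit_iff_bijective.mpr hbij
  have hnotunit := spectrum.mem_iff.mp hspec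
  apply hnotunit
  have : (algebraMap ℂ (H →L[ℂ] H)) (lam : ℂ) - T = -S := by
    rw [hSdef]
    simp [Algebra.algebraMap_eq_smul_one]
  rw [this]
  exact hunit.neg

/-- Hilbert-space content of Lemma 3.3(ii): if `λ > 0` lies in the spectrum of the bounded
self-adjoint operator `T`, then for every `ε > 0` there is a vector `φ` with
`Re⟪Tφ, φ⟫ > 0` and `‖Tφ‖² < (λ + ε) · Re⟪Tφ, φ⟫`. -/
theorem stmt_2 {H : Type*} [NormedAddCommGroup H] [InnerProductSpace ℂ H] [CompleteSpace H]
    (T : H →L[ℂ] H) (hT : IsSelfAdjoint T)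
    (lam : ℝ) (hlam : 0 < lam) (hspec : (lam : ℂ) ∈ spectrum ℂ T) :
    ∀ ε > (0 : ℝ), ∃ φ : H,
      0 < (⟪T φ, φ⟫_ℂ).re ∧ ‖T φ‖ ^ 2 < (lam + ε) * (⟪T φ, φ⟫_ℂ).re := by
  intro ε hε
  set δ : ℝ := min (lam / 2) (min 1 (ε * lam / (2 * (3 * lam + 1 + ε)))) with hδdef
  have hδpos : 0 < δ := by
    apply lt_min (by linarith)
    apply lt_min one_pos
    positivity
  have hδle1 : δ ≤ 1 := le_trans (min_le_right _ _) (min_le_left _ _)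
  have hδlam : δ ≤ lam / 2 := min_le_left _ _
  have hδeps : 2 * δ * (3 * lam + 1 + ε) ≤ ε * lam := by
    have h : δ ≤ ε * lam / (2 * (3 * lam + 1 + ε)) :=
      le_trans (min_le_right _ _) (min_le_right _ _)
    have hpos : (0 : ℝ) < 2 * (3 * lam + 1 + ε) := by positivity
    calc 2 * δ * (3 * lam + 1 + ε) ≤ 2 * (ε * lam / (2 * (3 * lam + 1 + ε))) * (3 * lam + 1 + ε) := by
          nlinarith
      _ = ε * lam := by field_simp
  obtain ⟨φ, hφ1, hφ2⟩ := approx_eigen T hT lam hspec δ hδpos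
  set w : H := T φ - (lam : ℂ) • φ with hw
  have hTφ : T φ = (lam : ℂ) • φ + w := by rw [hw]; abel
  have hre : (⟪T φ, φ⟫_ℂ).re = lam + (⟪w, φ⟫_ℂ).re := by
    rw [hTφ, inner_add_left, inner_smul_left]
    simp [Complex.conj_ofReal, inner_self_eq_norm_sq_to_K, hφ1]
  have hwsmall : |(⟪w, φ⟫_ℂ).re| < δ := by
    have h1 : ‖⟪w, φ⟫_ℂ‖ ≤ ‖w‖ * ‖φ‖ := norm_inner_le_norm _ _
    have h2 : |(⟪w, φ⟫_ℂ).re| ≤ ‖⟪w, φ⟫_ℂ‖ := Complex.abs_re_le_norm _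
    rw [hφ1, mul_one] at h1
    exact lt_of_le_of_lt (h2.trans h1) hφ2
  have hTnorm : ‖T φ‖ < lam + δ := by
    calc ‖T φ‖ = ‖(lam : ℂ) • φ + w‖ := by rw [hTφ]
      _ ≤ ‖(lam : ℂ) • φ‖ + ‖w‖ := norm_add_le _ _
      _ = lam + ‖w‖ := by
          rw [norm_smul, hφ1, mul_one, Complex.norm_real, Real.norm_eq_abs, abs_of_pos hlam]
      _ < lam + δ := by linarith [hφ2]
  have hrepos : 0 < (⟪T φ, φ⟫_ℂ).re := by
    rw [hre]
    have := abs_lt.mp hwsmall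
    linarith
  refine ⟨φ, hrepos, ?_⟩
  have hTnn : 0 ≤ ‖T φ‖ := norm_nonneg _
  have hrege : lam - δ ≤ (⟪T φ, φ⟫_ℂ).re := by
    rw [hre]
    have := abs_lt.mp hwsmall
    linarith
  nlinarith [hδeps, hδle1, hδlam, hδpos, hε, hlam, hTnorm, hrege, hTnn]
end
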